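/- Let W ∈ ℝ^{N×N} be symmetric such that W_{i,i} ≥ 2 Σ_{j≠i} max(−W_{i,j}, 0) for every i, and suppose there exist polarities β : {1,…,N} → {1,−1} with β_i β_j W_{i,j} ≥ 0 for all i ≠ j. Then the balanced signed graph Laplacian L^b = D − W + diag(W) is positive semi-definite. -/
import Mathlib


open Matrix

/-- If `W` is symmetric with `W i i ≥ 2 Σ_{j≠i} max(-W i j, 0)` for every `i`,
and the signed graph is balanced with some polarities `β` (`β i * β j * W i j ≥ 0`
for `i ≠ j`), then the balanced signed graph Laplacian `L^b = D - W + diag(W)`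
is positive semi-definite. -/
theorem balanced_laplacian_psd (N : ℕ)
    (W : Matrix (Fin N) (Fin N) ℝ) (hsym : W.IsSymm)
    (hdom : ∀ i, 2 * ∑ j ∈ Finset.univ.erase i, max (-W i j) 0 ≤ W i i)
    (hbal : ∃ β : Fin N → ℝ, (∀ i, β i = 1 ∨ β i = -1) ∧
      ∀ i j : Fin N, i ≠ j → 0 ≤ β i * β j * W i j)
    (Lb : Matrix (Fin N) (Fin N) ℝ)
    (hLb : Lb = Matrix.diagonal (fun k => ∑ l, W k l) - W
            + Matrix.diagonal (fun k => W k k)) :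
    ∀ x : Fin N → ℝ, 0 ≤ x ⬝ᵥ Lb.mulVec x := by
  obtain ⟨β, hβ, hbal⟩ := hbal
  intro x
  have hWdiag : ∀ i, 0 ≤ W i i := by
    intro i
    have h1 : 0 ≤ ∑ j ∈ Finset.univ.erase i, max (-W i j) 0 :=
      Finset.sum_nonneg fun j _ => le_max_right _ _
    linarith [hdom i]
  have hβsq : ∀ i, β i ^ 2 = 1 := by
    intro i; rcases hβ i with h | h <;> rw [h] <;> ring
  have hkey : ∀ i j, |W i j| * (β i * β j) = W i j := by
    intro i j
    have hb : β i * β j = 1 ∨ β i * β j = -1 := by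
      rcases hβ i with h1 | h1 <;> rcases hβ j with h2 | h2 <;> rw [h1, h2] <;> norm_num
    have h0 : 0 ≤ β i * β j * W i j := by
      by_cases hij : i = j
      · subst hij
        rcases hb with h | h
        · rw [h]; simpa using hWdiag i
        · exfalso; have := hβsq i; nlinarith
      · exact hbal i j hij
    rcases hb with h | h <;> rw [h] at h0 ⊢
    · rw [mul_one]; exact abs_of_nonneg (by linarith)
    · rw [mul_neg_one]
      have hle : W i j ≤ 0 := by linarith
      rw [abs_of_nonpos hle]; ring
  have hsym' : ∀ i j, W j i = W i j := fun i j => (congrFun (congrFun hsym i) j)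
  -- expand the quadratic form
  have hQ : x ⬝ᵥ Lb.mulVec x
      = ∑ i, (∑ j, (W i j * x i ^ 2 - W i j * x i * x j) + W i i * x i ^ 2) := by
    subst hLb
    simp only [dotProduct, mulVec, Matrix.add_apply, Matrix.sub_apply,
      Matrix.diagonal_apply]
    refine Finset.sum_congr rfl fun i _ => ?_
    simp only [ite_mul, zero_mul, sub_mul, add_mul, Finset.sum_add_distrib,
      Finset.sum_sub_distrib, Finset.sum_ite_eq, Finset.mem_univ, if_pos]
    have h1 : ∑ j, W i j * x i ^ 2 = (∑ l, W i l) * x i ^ 2 := (Finset.sum_mul _ _ _).symm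
    have h2 : ∑ j, W i j * x i * x j = x i * ∑ j, W i j * x j := by
      rw [Finset.mul_sum]; exact Finset.sum_congr rfl fun j _ => by ring
    rw [h1, h2]; ring
  -- pointwise decomposition of the off-diagonal part
  have hFG : ∀ i j, W i j * x i ^ 2 - W i j * x i * x j
      = 1/2 * |W i j| * (β i * x i - β j * x j) ^ 2
        + (W i j * x i ^ 2 - 1/2 * |W i j| * x i ^ 2 - 1/2 * |W i j| * x j ^ 2) := by
    intro i j
    have h1 := hβsq i; have h2 := hβsq j; have h3 := hkey i j
    linear_combination (x i * x j) * h3 - (|W i j| * x i ^ 2 / 2) * h1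
      - (|W i j| * x j ^ 2 / 2) * h2
  have hswap : ∑ i, ∑ j, 1/2 * |W i j| * x j ^ 2 = ∑ i, ∑ j, 1/2 * |W i j| * x i ^ 2 := by
    rw [Finset.sum_comm]
    refine Finset.sum_congr rfl fun i _ => Finset.sum_congr rfl fun j _ => ?_
    rw [hsym' i j]
  have hterm : ∀ a : ℝ, a - |a| = -(2 * max (-a) 0) := by
    intro a
    rcases le_total a 0 with h | h
    · rw [abs_of_nonpos h, max_eq_left (by linarith)]; ring
    · rw [abs_of_nonneg h, max_eq_right (by linarith)]; ring
  -- the main identity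
  have hmain : x ⬝ᵥ Lb.mulVec x
      = ∑ i, ∑ j, 1/2 * |W i j| * (β i * x i - β j * x j) ^ 2
        + ∑ i, x i ^ 2 * (W i i - 2 * ∑ j ∈ Finset.univ.erase i, max (-W i j) 0) := by
    rw [hQ]
    rw [show (∑ i, (∑ j, (W i j * x i ^ 2 - W i j * x i * x j) + W i i * x i ^ 2))
        = ∑ i, ∑ j, (W i j * x i ^ 2 - W i j * x i * x j) + ∑ i, W i i * x i ^ 2
      from Finset.sum_add_distrib]
    have e1 : ∑ i, ∑ j, (W i j * x i ^ 2 - W i j * x i * x j)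
        = ∑ i, ∑ j, 1/2 * |W i j| * (β i * x i - β j * x j) ^ 2
          + ∑ i, ∑ j, (W i j * x i ^ 2 - 1/2 * |W i j| * x i ^ 2 - 1/2 * |W i j| * x j ^ 2) := by
      rw [← Finset.sum_add_distrib]
      refine Finset.sum_congr rfl fun i _ => ?_
      rw [← Finset.sum_add_distrib]
      exact Finset.sum_congr rfl fun j _ => hFG i j
    rw [e1]
    have e2 : ∑ i, ∑ j, (W i j * x i ^ 2 - 1/2 * |W i j| * x i ^ 2 - 1/2 * |W i j| * x j ^ 2)
        = ∑ i, ∑ j, (W i j - |W i j|) * x i ^ 2 := by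
      have : ∀ i j : Fin N, W i j * x i ^ 2 - 1/2 * |W i j| * x i ^ 2 - 1/2 * |W i j| * x j ^ 2
          = ((W i j * x i ^ 2 - 1/2 * |W i j| * x i ^ 2 - 1/2 * |W i j| * x i ^ 2)
            + (1/2 * |W i j| * x i ^ 2 - 1/2 * |W i j| * x j ^ 2)) := fun i j => by ring
      calc ∑ i, ∑ j, (W i j * x i ^ 2 - 1/2 * |W i j| * x i ^ 2 - 1/2 * |W i j| * x j ^ 2)
          = ∑ i, ∑ j, ((W i j - |W i j|) * x i ^ 2
              + (1/2 * |W i j| * x i ^ 2 - 1/2 * |W i j| * x j ^ 2)) := by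
            exact Finset.sum_congr rfl fun i _ => Finset.sum_congr rfl fun j _ => by ring
        _ = ∑ i, ∑ j, (W i j - |W i j|) * x i ^ 2
            + (∑ i, ∑ j, 1/2 * |W i j| * x i ^ 2 - ∑ i, ∑ j, 1/2 * |W i j| * x j ^ 2) := by
            simp only [Finset.sum_add_distrib, Finset.sum_sub_distrib]
        _ = ∑ i, ∑ j, (W i j - |W i j|) * x i ^ 2 := by rw [hswap]; ring
    rw [e2, add_assoc]
    congr 1
    rw [← Finset.sum_add_distrib]
    refine Finset.sum_congr rfl fun i _ => ?_
    have e3 : ∑ j ∈ Finset.univ.erase i, max (-W i j) 0 = ∑ j, max (-W i j) 0 := by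
      refine Finset.sum_erase _ ?_
      rw [max_eq_right]; exact neg_nonpos.mpr (hWdiag i)
    rw [e3]
    have e4 : ∑ j, (W i j - |W i j|) * x i ^ 2 = (∑ j, -(2 * max (-W i j) 0)) * x i ^ 2 := by
      rw [← Finset.sum_mul]
      congr 1
      exact Finset.sum_congr rfl fun j _ => hterm (W i j)
    rw [e4]
    have e5 : ∑ j, -(2 * max (-W i j) 0) = -(2 * ∑ j, max (-W i j) 0) := by
      simp [Finset.mul_sum]
    rw [e5]
    ring
  rw [hmain]
  apply add_nonneg
  · exact Finset.sum_nonneg fun i _ => Finset.sum_nonneg fun j _ => by positivity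
  · refine Finset.sum_nonneg fun i _ => ?_
    exact mul_nonneg (sq_nonneg _) (by linarith [hdom i])
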